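/- Let F be a field and let Γ₁ : A = ⊕_{g∈G} A^(g) and Γ₂ : B = ⊕_{h∈H} B^(h) be group gradings on associative F-algebras such that supp Γ₁ contains at least two distinct elements and B ≠ 0. Then the product of A and B exists neither in GrAlg_F nor in GrAlg¹_F (in the latter case A and B are assumed unital). -/

import Mathlib

set_option autoImplicit false

universe u

/-- A group grading on a (not necessarily unital) associative algebra over `F`:
an object of the category `GrAlg_F`. -/
structure GrAlg (F : Type u) [Field F] : Type (u + 1) where
  A : Type u
  [ringA : NonUnitalRing A]
  [modA : Module F A]
  [sccA : SMulCommClass F A A]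
  [istA : IsScalarTower F A A]
  G : Type u
  [grpG : Group G]
  comp : G → Submodule F A
  mul_mem : ∀ ⦃g h : G⦄ ⦃a b : A⦄, a ∈ comp g → b ∈ comp h → a * b ∈ comp (g * h)
  independent : iSupIndep comp
  spans : (⨆ g, comp g) = ⊤

attribute [instance] GrAlg.ringA GrAlg.modA GrAlg.sccA GrAlg.istA GrAlg.grpG

variable {F : Type u} [Field F]

/-- The grading is trivial if all components other than the identity component vanish. -/
def GrAlg.IsTrivialGrading (X : GrAlg F) : Prop := ∀ g : X.G, g ≠ 1 → X.comp g = ⊥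

/-- The support of a grading. -/
def GrAlg.supp (X : GrAlg F) : Set X.G := {g | X.comp g ≠ ⊥}

/-- A morphism in `GrAlg_F`: an algebra homomorphism mapping each graded component
into some graded component. -/
@[ext]
structure GrAlgHom (X Y : GrAlg F) where
  hom : X.A →ₙₐ[F] Y.A
  graded : ∀ g : X.G, ∃ h : Y.G, ∀ a ∈ X.comp g, hom a ∈ Y.comp h

def GrAlgHom.id (X : GrAlg F) : GrAlgHom X X where
  hom := NonUnitalAlgHom.id F X.A
  graded g := ⟨g, fun a ha => ha⟩

def GrAlgHom.comp {X Y Z : GrAlg F} (g : GrAlgHom Y Z) (f : GrAlgHom X Y) :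
    GrAlgHom X Z where
  hom := g.hom.comp f.hom
  graded s := by
    obtain ⟨h, hh⟩ := f.graded s
    obtain ⟨k, hk⟩ := g.graded h
    exact ⟨k, fun a ha => by simpa using hk _ (hh a ha)⟩

/-- An object of `GrAlg¹_F`: a group grading on a unital associative algebra. -/
structure GrAlgOne (F : Type u) [Field F] extends GrAlg F : Type (u + 1) where
  one : A
  one_mul : ∀ a : A, one * a = a
  mul_one : ∀ a : A, a * one = a

/-- A morphism in `GrAlg¹_F`: a unital graded algebra homomorphism. -/
@[ext]
structure GrAlgOneHom (X Y : GrAlgOne F) extends GrAlgHom X.toGrAlg Y.toGrAlg where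
  map_one : toGrAlgHom.hom X.one = Y.one

def GrAlgOneHom.id (X : GrAlgOne F) : GrAlgOneHom X X where
  toGrAlgHom := GrAlgHom.id X.toGrAlg
  map_one := rfl

def GrAlgOneHom.comp {X Y Z : GrAlgOne F} (g : GrAlgOneHom Y Z) (f : GrAlgOneHom X Y) :
    GrAlgOneHom X Z where
  toGrAlgHom := g.toGrAlgHom.comp f.toGrAlgHom
  map_one := by
    show (g.toGrAlgHom.hom.comp f.toGrAlgHom.hom) X.one = Z.one
    simp [f.map_one, g.map_one]

/-- A morphism in `tilde{GrAlg_F}`: a graded injective homomorphism. -/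
@[ext]
structure TGrAlgHom (X Y : GrAlg F) extends GrAlgHom X Y where
  injOn : ∀ g : X.G, Set.InjOn toGrAlgHom.hom (X.comp g)

def TGrAlgHom.id (X : GrAlg F) : TGrAlgHom X X where
  toGrAlgHom := GrAlgHom.id X
  injOn g := fun a _ b _ hab => hab

def TGrAlgHom.comp {X Y Z : GrAlg F} (g : TGrAlgHom Y Z) (f : TGrAlgHom X Y) :
    TGrAlgHom X Z where
  toGrAlgHom := g.toGrAlgHom.comp f.toGrAlgHom
  injOn s := by
    intro a ha b hb hab
    obtain ⟨h, hh⟩ := f.graded s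
    exact f.injOn s ha hb (g.injOn h (hh a ha) (hh b hb) hab)

/-- A morphism in `tilde{GrAlg¹_F}`: a unital graded injective homomorphism. -/
@[ext]
structure TGrAlgOneHom (X Y : GrAlgOne F) extends TGrAlgHom X.toGrAlg Y.toGrAlg where
  map_one : toGrAlgHom.hom X.one = Y.one

def TGrAlgOneHom.id (X : GrAlgOne F) : TGrAlgOneHom X X where
  toTGrAlgHom := TGrAlgHom.id X.toGrAlg
  map_one := rfl

def TGrAlgOneHom.comp {X Y Z : GrAlgOne F} (g : TGrAlgOneHom Y Z) (f : TGrAlgOneHom X Y) :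
    TGrAlgOneHom X Z where
  toTGrAlgHom := g.toTGrAlgHom.comp f.toTGrAlgHom
  map_one := by
    show (g.toGrAlgHom.hom.comp f.toGrAlgHom.hom) X.one = Z.one
    simp [f.map_one, g.map_one]
section Aux

variable {F : Type u} [Field F]

lemma GrAlg.mem_unique (X : GrAlg F) {g h : X.G} {a : X.A} (ha : a ≠ 0)
    (h1 : a ∈ X.comp g) (h2 : a ∈ X.comp h) : g = h := by
  by_contra hne
  exact ha (Submodule.disjoint_def.mp (X.independent.pairwiseDisjoint hne) a h1 h2)

lemma GrAlg.exists_homog (X : GrAlg F) (hX : ∃ x : X.A, x ≠ 0) :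
    ∃ (h : X.G) (b : X.A), b ∈ X.comp h ∧ b ≠ 0 := by
  obtain ⟨x, hx⟩ := hX
  by_contra hcon
  push_neg at hcon
  have hbot : ∀ h : X.G, X.comp h = ⊥ := by
    intro h
    rw [Submodule.eq_bot_iff]
    intro b hb
    by_contra hbne
    exact hbne (hcon h b hb)
  have : (⊤ : Submodule F X.A) = ⊥ := by
    rw [← X.spans]
    simp [hbot]
  exact hx (by simpa using Submodule.eq_bot_iff _ |>.mp this x (by trivial))

lemma GrAlg.exists_homog_of_mem_supp (X : GrAlg F) {g : X.G} (hg : g ∈ X.supp) :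
    ∃ a : X.A, a ∈ X.comp g ∧ a ≠ 0 := by
  obtain ⟨a, ha, hane⟩ := Submodule.ne_bot_iff _ |>.mp hg
  exact ⟨a, ha, hane⟩

end Aux
section OneMem

variable {F : Type u} [Field F]

/-- In a unital graded algebra, the unit lies in the identity component. -/
lemma GrAlgOne.one_mem (X : GrAlgOne F) : X.one ∈ X.comp 1 := by
  classical
  -- decompose `one` into finitely many homogeneous pieces
  have hdec : ∃ (s : Finset X.G) (c : X.G → X.A),
      (∀ g : X.G, c g ∈ X.comp g) ∧ X.one = ∑ g ∈ s, c g := by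
    have hmem : X.one ∈ ⨆ g, X.comp g := by rw [X.spans]; trivial
    refine Submodule.iSup_induction (motive := fun x => ∃ (s : Finset X.G) (c : X.G → X.A),
      (∀ g : X.G, c g ∈ X.comp g) ∧ x = ∑ g ∈ s, c g) X.comp hmem ?_ ?_ ?_
    · intro i x hx
      refine ⟨{i}, fun g => if g = i then x else 0, ?_, ?_⟩
      · intro g
        by_cases hg : g = i
        · subst hg; simpa using hx
        · simp [hg]
      · simp
    · exact ⟨∅, fun _ => 0, fun g => Submodule.zero_mem _, by simp⟩
    · rintro x y ⟨s1, c1, hc1, rfl⟩ ⟨s2, c2, hc2, rfl⟩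
      refine ⟨s1 ∪ s2, fun g => (if g ∈ s1 then c1 g else 0) + (if g ∈ s2 then c2 g else 0),
        ?_, ?_⟩
      · intro g
        apply Submodule.add_mem <;> · split <;> simp [hc1, hc2, Submodule.zero_mem]
      · rw [Finset.sum_add_distrib]
        congr 1
        · rw [Finset.sum_ite_mem, Finset.union_inter_cancel_left]
        · rw [Finset.sum_ite_mem, Finset.union_inter_cancel_right]
  obtain ⟨s₀, c₀, hc₀, hsum₀⟩ := hdec
  -- normalize so that `1 ∈ s`
  set s : Finset X.G := insert 1 s₀ with hs
  set c : X.G → X.A := fun g => if g ∈ s₀ then c₀ g else 0 with hc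
  have hcmem : ∀ g : X.G, c g ∈ X.comp g := by
    intro g
    by_cases hg : g ∈ s₀
    · simp only [hc, if_pos hg]; exact hc₀ g
    · simp only [hc, if_neg hg]; exact Submodule.zero_mem _
  have hsum : X.one = ∑ g ∈ s, c g := by
    rw [hs, hsum₀]
    by_cases h1 : (1 : X.G) ∈ s₀
    · rw [Finset.insert_eq_self.mpr h1]
      apply Finset.sum_congr rfl
      intro g hg; rw [hc]; simp [hg]
    · rw [Finset.sum_insert h1]
      have : c 1 = 0 := by rw [hc]; simp [h1]
      rw [this, zero_add]
      apply Finset.sum_congr rfl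
      intro g hg; rw [hc]; simp [hg]
  have h1s : (1 : X.G) ∈ s := Finset.mem_insert_self _ _
  set e : X.A := c 1 with he
  -- every homogeneous element satisfies a * e = a
  have key : ∀ (k : X.G) (a : X.A), a ∈ X.comp k → a * e = a := by
    intro k a ha
    have hexp : a = a * e + ∑ g ∈ s.erase 1, a * c g := by
      conv_lhs => rw [← X.mul_one a, hsum, Finset.mul_sum]
      rw [← Finset.add_sum_erase _ _ h1s]
    have hmem1 : a - a * e ∈ X.comp k := by
      have h1 : a * e ∈ X.comp k := by
        have := X.mul_mem ha (hcmem 1)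
        simpa using this
      exact Submodule.sub_mem _ ha h1
    have hmem2 : a - a * e ∈ ⨆ (j : X.G) (_ : j ≠ k), X.comp j := by
      have : a - a * e = ∑ g ∈ s.erase 1, a * c g := by
        rw [sub_eq_iff_eq_add']; exact hexp
      rw [this]
      apply Submodule.sum_mem
      intro g hg
      have hgne : g ≠ 1 := Finset.ne_of_mem_erase hg
      have hmem : a * c g ∈ X.comp (k * g) := X.mul_mem ha (hcmem g)
      have hne : k * g ≠ k := by
        intro hcon
        exact hgne (mul_eq_left.mp hcon)
      exact Submodule.mem_iSup_of_mem (k * g) (Submodule.mem_iSup_of_mem hne hmem)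
    have : a - a * e = 0 :=
      Submodule.disjoint_def.mp (X.independent k) _ hmem1 hmem2
    exact (sub_eq_zero.mp this).symm
  have hall : ∀ a : X.A, a * e = a := by
    intro a
    have hmem : a ∈ ⨆ g, X.comp g := by rw [X.spans]; trivial
    refine Submodule.iSup_induction (motive := fun x => x * e = x) X.comp hmem ?_ (by simp) ?_
    · intro i x hx; exact key i x hx
    · intro x y hx hy; rw [add_mul, hx, hy]
  have heone : e = X.one := by rw [← X.one_mul e]; exact hall X.one
  rw [← heone]
  exact hcmem 1

end OneMem
section RingStr

variable {F : Type u} [Field F]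

/-- The unital ring structure on a `GrAlgOne`. -/
abbrev GrAlgOne.ring (X : GrAlgOne F) : Ring X.A :=
  { X.ringA with
    one := X.one
    one_mul := X.one_mul
    mul_one := X.mul_one }

/-- The `F`-algebra structure on a `GrAlgOne`. -/
def GrAlgOne.algebra (X : GrAlgOne F) :
    @Algebra F X.A _ (X.ring).toSemiring :=
  letI := X.ring
  Algebra.ofModule (fun r x y => smul_mul_assoc r x y) (fun r x y => mul_smul_comm r x y)

lemma GrAlgOne.pow_mem (X : GrAlgOne F) {g : X.G} {x : X.A} (hx : x ∈ X.comp g) :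
    ∀ n : ℕ, (letI := X.ring; x ^ n) ∈ X.comp (g ^ n) := by
  letI := X.ring
  intro n
  induction n with
  | zero =>
    rw [pow_zero, pow_zero]
    exact X.one_mem
  | succ n ih =>
    rw [pow_succ, pow_succ]
    exact X.mul_mem ih hx

end RingStr
section GzDef

/-- The grading group `ℤ` (multiplicatively, lifted to universe `u`). -/
abbrev Gz : Type u := Multiplicative (ULift.{u} ℤ)

def gzv (n : Gz.{u}) : ℤ := (Multiplicative.toAdd n).down

def gzo (k : ℤ) : Gz.{u} := Multiplicative.ofAdd (ULift.up k)

@[simp] lemma gzv_mul (m n : Gz.{u}) : gzv (m * n) = gzv m + gzv n := rfl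
@[simp] lemma gzv_one : gzv (1 : Gz.{u}) = 0 := rfl
@[simp] lemma gzv_gzo (k : ℤ) : gzv (gzo.{u} k) = k := rfl
@[simp] lemma gzo_gzv (n : Gz.{u}) : gzo (gzv n) = n := rfl

lemma gzv_injective : Function.Injective (gzv.{u}) := by
  intro m n h
  have := congrArg gzo.{u} h
  simpa using this

end GzDef

section PolyOne

variable (F : Type u) [Field F]
open Polynomial

noncomputable def polyComp (n : Gz.{u}) : Submodule F (Polynomial F) :=
  if 0 ≤ gzv n then Submodule.span F {(X : Polynomial F) ^ (gzv n).toNat} else ⊥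

lemma polyComp_mul_mem : ∀ ⦃m n : Gz.{u}⦄ ⦃a b : Polynomial F⦄,
    a ∈ polyComp F m → b ∈ polyComp F n → a * b ∈ polyComp F (m * n) := by
  intro m n a b ha hb
  by_cases hm : 0 ≤ gzv m
  · by_cases hn : 0 ≤ gzv n
    · rw [polyComp, if_pos hm] at ha
      rw [polyComp, if_pos hn] at hb
      obtain ⟨c, rfl⟩ := Submodule.mem_span_singleton.mp ha
      obtain ⟨d, rfl⟩ := Submodule.mem_span_singleton.mp hb
      rw [polyComp, if_pos (by rw [gzv_mul]; exact add_nonneg hm hn)]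
      apply Submodule.mem_span_singleton.mpr
      refine ⟨c * d, ?_⟩
      rw [gzv_mul, Int.toNat_add hm hn, pow_add, smul_mul_assoc, mul_smul_comm, smul_smul]
    · rw [polyComp, if_neg hn] at hb
      have : b = 0 := by simpa using hb
      rw [this, mul_zero]
      exact Submodule.zero_mem _
  · rw [polyComp, if_neg hm] at ha
    have : a = 0 := by simpa using ha
    rw [this, zero_mul]
    exact Submodule.zero_mem _

lemma polyComp_indep : iSupIndep (polyComp F) := by
  intro n
  by_cases hn : 0 ≤ gzv n
  · rw [Submodule.disjoint_def]
    intro x hx hsup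
    rw [polyComp, if_pos hn] at hx
    obtain ⟨c, rfl⟩ := Submodule.mem_span_singleton.mp hx
    have hker : (⨆ (m : Gz.{u}) (_ : m ≠ n), polyComp F m)
        ≤ LinearMap.ker (lcoeff F (gzv n).toNat) := by
      refine iSup_le fun m => iSup_le fun hm => ?_
      by_cases hm0 : 0 ≤ gzv m
      · rw [polyComp, if_pos hm0, Submodule.span_le]
        intro p hp
        simp only [Set.mem_singleton_iff] at hp
        subst hp
        simp only [SetLike.mem_coe, LinearMap.mem_ker, lcoeff_apply, coeff_X_pow]
        rw [if_neg]
        intro hEq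
        apply hm
        apply gzv_injective
        rw [← Int.toNat_of_nonneg hm0, ← Int.toNat_of_nonneg hn, hEq]
      · rw [polyComp, if_neg hm0]
        exact bot_le
    have hz := hker hsup
    simp only [LinearMap.mem_ker, lcoeff_apply] at hz
    rw [coeff_smul, coeff_X_pow, if_pos rfl, smul_eq_mul, mul_one] at hz
    rw [hz, zero_smul]
  · rw [polyComp, if_neg hn]
    exact disjoint_bot_left

lemma polyComp_spans : (⨆ n, polyComp F n) = ⊤ := by
  rw [eq_top_iff]
  intro p _
  have hrep : p = ∑ i ∈ p.support, (monomial i) (p.coeff i) := p.as_sum_support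
  rw [hrep]
  apply Submodule.sum_mem
  intro i _
  apply Submodule.mem_iSup_of_mem (gzo (i : ℤ))
  rw [polyComp, if_pos (by simp)]
  apply Submodule.mem_span_singleton.mpr
  refine ⟨p.coeff i, ?_⟩
  rw [smul_eq_C_mul, gzv_gzo, Int.toNat_natCast, C_mul_X_pow_eq_monomial]

/-- The free unital test object: `F[X]` with its `ℤ`-grading. -/
noncomputable def PolyObj : GrAlgOne F where
  A := Polynomial F
  G := Gz.{u}
  comp := polyComp F
  mul_mem := polyComp_mul_mem F
  independent := polyComp_indep F
  spans := polyComp_spans F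
  one := 1
  one_mul := one_mul
  mul_one := mul_one

lemma X_mem_polyComp : (X : Polynomial F) ∈ polyComp F (gzo 1) := by
  rw [polyComp, if_pos (by simp)]
  apply Submodule.mem_span_singleton.mpr
  exact ⟨1, by norm_num⟩

end PolyOne
section PolyHomSec

variable {F : Type u} [Field F]
open Polynomial

noncomputable def GrAlgOne.aevalHom (X : GrAlgOne F) (x : X.A) :
    Polynomial F →ₙₐ[F] X.A :=
  letI := X.ring
  letI := X.algebra
  { toFun := fun p => Polynomial.aeval x p
    map_add' := fun p q => map_add _ p q
    map_mul' := fun p q => map_mul _ p q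
    map_zero' := map_zero _
    map_smul' := fun c p => map_smul _ c p }

lemma GrAlgOne.aevalHom_X (X : GrAlgOne F) (x : X.A) :
    X.aevalHom x Polynomial.X = x := by
  letI := X.ring
  letI := X.algebra
  show Polynomial.aeval x Polynomial.X = x
  exact aeval_X x

/-- The graded unital homomorphism `F[X] → X` sending `X` to a homogeneous element. -/
noncomputable def GrAlgOne.polyHom (X : GrAlgOne F) (g : X.G) (x : X.A)
    (hx : x ∈ X.comp g) : GrAlgOneHom (PolyObj F) X where
  hom := X.aevalHom x
  graded := by
    show ∀ n : Gz.{u}, ∃ h : X.G, ∀ a ∈ polyComp F n, X.aevalHom x a ∈ X.comp h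
    intro n
    by_cases hn : 0 ≤ gzv n
    · refine ⟨g ^ (gzv n).toNat, ?_⟩
      intro a ha
      have ha' : a ∈ polyComp F n := ha
      unfold polyComp at ha'
      rw [if_pos hn] at ha'
      obtain ⟨c, rfl⟩ := Submodule.mem_span_singleton.mp ha'
      letI := X.ring
      letI := X.algebra
      have heq : X.aevalHom x (c • Polynomial.X ^ (gzv n).toNat)
          = c • x ^ (gzv n).toNat := by
        show Polynomial.aeval x _ = _
        rw [map_smul, aeval_X_pow]
      show X.aevalHom x (c • Polynomial.X ^ (gzv n).toNat)
          ∈ X.comp (g ^ (gzv n).toNat)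
      rw [heq]
      exact Submodule.smul_mem _ c (X.pow_mem hx _)
    · refine ⟨1, ?_⟩
      intro a ha
      have ha' : a ∈ polyComp F n := ha
      unfold polyComp at ha'
      rw [if_neg hn] at ha'
      have : a = 0 := by simpa using ha'
      rw [this]
      show X.aevalHom x 0 ∈ X.comp 1
      have h0 : X.aevalHom x 0 = 0 := map_zero _
      rw [h0]
      exact Submodule.zero_mem _
  map_one := by
    letI := X.ring
    letI := X.algebra
    show Polynomial.aeval x 1 = X.one
    rw [map_one]
    rfl

lemma GrAlgOne.aevalHom_naturality {X Y : GrAlgOne F} (f : GrAlgOneHom X Y)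
    (x : X.A) (p : Polynomial F) :
    f.toGrAlgHom.hom (X.aevalHom x p) = Y.aevalHom (f.toGrAlgHom.hom x) p := by
  letI := X.ring
  letI := Y.ring
  letI := X.algebra
  letI := Y.algebra
  let f' : X.A →ₐ[F] Y.A :=
    { toFun := f.toGrAlgHom.hom
      map_one' := f.map_one
      map_mul' := fun a b => map_mul _ a b
      map_zero' := map_zero _
      map_add' := fun a b => map_add _ a b
      commutes' := fun c => by
        show f.toGrAlgHom.hom (algebraMap F X.A c) = algebraMap F Y.A c
        rw [Algebra.algebraMap_eq_smul_one, Algebra.algebraMap_eq_smul_one, map_smul]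
        congr 1
        exact f.map_one }
  show f' (Polynomial.aeval x p) = Polynomial.aeval (f' x) p
  rw [Polynomial.aeval_algHom_apply]

end PolyHomSec
section SPdef

variable (F : Type u) [Field F]
open Polynomial

/-- Constant-term-free polynomials: the free nonunital algebra on one generator. -/
noncomputable abbrev SP : Submodule F (Polynomial F) := LinearMap.ker (lcoeff F 0)

noncomputable instance : Mul (SP F) :=
  ⟨fun p q => ⟨p.1 * q.1, by
    have hp : p.1.coeff 0 = 0 := p.2
    have hq : q.1.coeff 0 = 0 := q.2
    simp only [LinearMap.mem_ker, lcoeff_apply, mul_coeff_zero, hp, hq, mul_zero]⟩⟩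

@[simp] lemma SP.val_mul (p q : SP F) :
    ((p * q : SP F) : Polynomial F) = (p : Polynomial F) * (q : Polynomial F) := rfl

noncomputable instance : NonUnitalRing (SP F) :=
  { (inferInstance : AddCommGroup (SP F)) with
    mul := (· * ·)
    left_distrib := fun a b c => Subtype.ext (by simp [mul_add])
    right_distrib := fun a b c => Subtype.ext (by simp [add_mul])
    zero_mul := fun a => Subtype.ext (by simp)
    mul_zero := fun a => Subtype.ext (by simp)
    mul_assoc := fun a b c => Subtype.ext (by simp [mul_assoc]) }

instance : SMulCommClass F (SP F) (SP F) :=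
  ⟨fun c p q => Subtype.ext (by
    show c • ((p : Polynomial F) * q) = (p : Polynomial F) * (c • (q : Polynomial F))
    rw [mul_smul_comm])⟩

instance : IsScalarTower F (SP F) (SP F) :=
  ⟨fun c p q => Subtype.ext (by
    show (c • (p : Polynomial F)) * q = c • ((p : Polynomial F) * q)
    rw [smul_mul_assoc])⟩

/-- The generator powers `X^(k+1)` of `SP`. -/
noncomputable def spX (k : ℕ) : SP F :=
  ⟨X ^ (k + 1), by simp [LinearMap.mem_ker, coeff_X_pow]⟩

lemma spX_mul (a b : ℕ) : spX F a * spX F b = spX F (a + b + 1) := by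
  apply Subtype.ext
  show (X : Polynomial F) ^ (a + 1) * X ^ (b + 1) = X ^ (a + b + 1 + 1)
  rw [← pow_add]
  ring_nf

noncomputable def spComp (n : Gz.{u}) : Submodule F (SP F) :=
  if 1 ≤ gzv n then Submodule.span F {spX F ((gzv n).toNat - 1)} else ⊥

lemma spComp_mul_mem : ∀ ⦃m n : Gz.{u}⦄ ⦃a b : SP F⦄,
    a ∈ spComp F m → b ∈ spComp F n → a * b ∈ spComp F (m * n) := by
  intro m n a b ha hb
  by_cases hm : 1 ≤ gzv m
  · by_cases hn : 1 ≤ gzv n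
    · rw [spComp, if_pos hm] at ha
      rw [spComp, if_pos hn] at hb
      obtain ⟨c, rfl⟩ := Submodule.mem_span_singleton.mp ha
      obtain ⟨d, rfl⟩ := Submodule.mem_span_singleton.mp hb
      rw [spComp, if_pos (by rw [gzv_mul]; omega)]
      apply Submodule.mem_span_singleton.mpr
      refine ⟨c * d, ?_⟩
      rw [smul_mul_assoc, mul_smul_comm, smul_smul, spX_mul]
      congr 2
      rw [gzv_mul]
      omega
    · rw [spComp, if_neg hn] at hb
      have : b = 0 := by simpa using hb
      rw [this, mul_zero]
      exact Submodule.zero_mem _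
  · rw [spComp, if_neg hm] at ha
    have : a = 0 := by simpa using ha
    rw [this, zero_mul]
    exact Submodule.zero_mem _

/-- The coefficient functionals on `SP`. -/
noncomputable def spCoeff (k : ℕ) : SP F →ₗ[F] F :=
  (lcoeff F k).comp (SP F).subtype

lemma spCoeff_spX (k j : ℕ) : spCoeff F k (spX F j) = if k = j + 1 then 1 else 0 := by
  show ((X : Polynomial F) ^ (j+1)).coeff k = _
  rw [coeff_X_pow]

lemma spComp_indep : iSupIndep (spComp F) := by
  intro n
  by_cases hn : 1 ≤ gzv n
  · rw [Submodule.disjoint_def]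
    intro x hx hsup
    rw [spComp, if_pos hn] at hx
    obtain ⟨c, rfl⟩ := Submodule.mem_span_singleton.mp hx
    have hker : (⨆ (m : Gz.{u}) (_ : m ≠ n), spComp F m)
        ≤ LinearMap.ker (spCoeff F (gzv n).toNat) := by
      refine iSup_le fun m => iSup_le fun hm => ?_
      by_cases hm0 : 1 ≤ gzv m
      · rw [spComp, if_pos hm0, Submodule.span_le]
        intro p hp
        simp only [Set.mem_singleton_iff] at hp
        subst hp
        simp only [SetLike.mem_coe, LinearMap.mem_ker, spCoeff_spX]
        rw [if_neg]
        intro hEq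
        apply hm
        apply gzv_injective
        omega
      · rw [spComp, if_neg hm0]
        exact bot_le
    have hz := hker hsup
    simp only [LinearMap.mem_ker, map_smul, spCoeff_spX] at hz
    rw [if_pos (by omega), smul_eq_mul, mul_one] at hz
    rw [hz, zero_smul]
  · rw [spComp, if_neg hn]
    exact disjoint_bot_left

lemma spComp_spans : (⨆ n, spComp F n) = ⊤ := by
  classical
  rw [eq_top_iff]
  rintro ⟨p, hp⟩ -
  have hp0 : p.coeff 0 = 0 := hp
  have hsub : ∀ i ∈ p.support, i ≠ 0 := by
    intro i hi
    rintro rfl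
    rw [mem_support_iff] at hi
    exact hi hp0
  set f : ℕ → SP F := fun i => if h : i = 0 then 0
    else ⟨monomial i (p.coeff i), by
      simp [LinearMap.mem_ker, coeff_monomial, h]⟩ with hf
  have hval : ((∑ i ∈ p.support, f i : SP F) : Polynomial F) = p := by
    rw [AddSubmonoidClass.coe_finset_sum]
    have : ∀ i ∈ p.support, ((f i : SP F) : Polynomial F) = monomial i (p.coeff i) := by
      intro i hi
      rw [hf]
      simp only [dif_neg (hsub i hi)]
    rw [Finset.sum_congr rfl this]
    exact p.as_sum_support.symm
  have hrep : (⟨p, hp⟩ : SP F) = ∑ i ∈ p.support, f i := Subtype.ext hval.symm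
  rw [hrep]
  apply Submodule.sum_mem
  intro i hi
  apply Submodule.mem_iSup_of_mem (gzo (i : ℤ))
  have hi0 : i ≠ 0 := hsub i hi
  rw [spComp, if_pos (by simp; omega)]
  apply Submodule.mem_span_singleton.mpr
  refine ⟨p.coeff i, ?_⟩
  apply Subtype.ext
  show p.coeff i • (X : Polynomial F) ^ ((gzv (gzo (i:ℤ))).toNat - 1 + 1) = _
  rw [hf]
  simp only [dif_neg hi0]
  rw [smul_eq_C_mul]
  have : (gzv (gzo (i:ℤ))).toNat - 1 + 1 = i := by simp; omega
  rw [this, C_mul_X_pow_eq_monomial]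

/-- The free nonunital test object. -/
noncomputable def SPObj : GrAlg F where
  A := SP F
  G := Gz.{u}
  comp := spComp F
  mul_mem := spComp_mul_mem F
  independent := spComp_indep F
  spans := spComp_spans F

lemma spX_mem_spComp : spX F 0 ∈ spComp F (gzo 1) := by
  rw [spComp, if_pos (by simp)]
  apply Submodule.mem_span_singleton.mpr
  exact ⟨1, by norm_num⟩

end SPdef
section EvalS

variable {F : Type u} [Field F]
open Polynomial

/-- Nonunital power: `nup x n = x^(n+1)`. -/
def nup {R : Type u} [NonUnitalRing R] (x : R) : ℕ → R
  | 0 => x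
  | n + 1 => nup x n * x

lemma nup_mem (X : GrAlg F) {g : X.G} {x : X.A} (hx : x ∈ X.comp g) :
    ∀ n : ℕ, nup x n ∈ X.comp (g ^ (n + 1))
  | 0 => by rw [pow_one]; exact hx
  | n + 1 => by
    rw [pow_succ]
    exact X.mul_mem (nup_mem X hx n) hx

lemma inr_nup {R : Type u} [NonUnitalRing R] [Module F R] [SMulCommClass F R R]
    [IsScalarTower F R R] (x : R) :
    ∀ n : ℕ, (Unitization.inr x : Unitization F R) ^ (n + 1) = Unitization.inr (nup x n)
  | 0 => by rw [pow_one]; rfl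
  | n + 1 => by
    rw [pow_succ, inr_nup x n, nup]
    exact (Unitization.inr_mul F (nup x n) x).symm

lemma fst_aeval_sp (X : GrAlg F) (x : X.A) (p : SP F) :
    (Polynomial.aeval (Unitization.inr x : Unitization F X.A) (p : Polynomial F)).fst
      = 0 := by
  have h := Polynomial.aeval_algHom_apply (Unitization.fstHom F X.A)
    (Unitization.inr x : Unitization F X.A) (p : Polynomial F)
  have h2 : (Unitization.fstHom F X.A) (Unitization.inr x : Unitization F X.A) = 0 :=
    Unitization.fst_inr F x
  rw [h2] at h
  have h3 : Polynomial.aeval (0 : F) (p : Polynomial F) = 0 := by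
    rw [Polynomial.aeval_def, Polynomial.eval₂_at_zero]
    have hc : (p : Polynomial F).coeff 0 = 0 := p.2
    rw [hc, map_zero]
  rw [h3] at h
  exact h.symm

/-- Evaluation of a constant-free polynomial at an element of a nonunital algebra. -/
noncomputable def GrAlg.evalS (X : GrAlg F) (x : X.A) : SP F →ₙₐ[F] X.A where
  toFun p := (Polynomial.aeval (Unitization.inr x : Unitization F X.A)
    (p : Polynomial F)).snd
  map_add' p q := by
    simp only [Submodule.coe_add, map_add, Unitization.snd_add]
  map_mul' p q := by
    have h1 := fst_aeval_sp X x p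
    have h2 := fst_aeval_sp X x q
    show (Polynomial.aeval (Unitization.inr x : Unitization F X.A)
      ((p * q : SP F) : Polynomial F)).snd = _
    rw [SP.val_mul, map_mul, Unitization.snd_mul, h1, h2, zero_smul, zero_smul,
      add_zero, zero_add]
  map_zero' := by
    simp only [ZeroMemClass.coe_zero, map_zero, Unitization.snd_zero]
  map_smul' c p := by
    simp only [SetLike.val_smul, map_smul, Unitization.snd_smul, RingHom.id_apply,
      MonoidHom.id_apply]

lemma GrAlg.evalS_spX (X : GrAlg F) (x : X.A) (k : ℕ) :
    X.evalS x (spX F k) = nup x k := by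
  show (Polynomial.aeval (Unitization.inr x : Unitization F X.A)
    ((Polynomial.X : Polynomial F) ^ (k+1))).snd = nup x k
  rw [map_pow, aeval_X, inr_nup, Unitization.snd_inr]

lemma GrAlg.evalS_gen (X : GrAlg F) (x : X.A) : X.evalS x (spX F 0) = x :=
  X.evalS_spX x 0

/-- The graded homomorphism from the free test object determined by a homogeneous
element. -/
noncomputable def GrAlg.spHom (X : GrAlg F) (g : X.G) (x : X.A) (hx : x ∈ X.comp g) :
    GrAlgHom (SPObj F) X where
  hom := X.evalS x
  graded := by
    show ∀ n : Gz.{u}, ∃ h : X.G, ∀ a ∈ spComp F n, X.evalS x a ∈ X.comp h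
    intro n
    by_cases hn : 1 ≤ gzv n
    · refine ⟨g ^ ((gzv n).toNat - 1 + 1), ?_⟩
      intro a ha
      have ha' : a ∈ spComp F n := ha
      unfold spComp at ha'
      rw [if_pos hn] at ha'
      obtain ⟨c, rfl⟩ := Submodule.mem_span_singleton.mp ha'
      show X.evalS x (c • spX F ((gzv n).toNat - 1)) ∈ _
      rw [map_smul]
      exact Submodule.smul_mem _ c (X.evalS_spX x _ ▸ nup_mem X hx _)
    · refine ⟨1, ?_⟩
      intro a ha
      have ha' : a ∈ spComp F n := ha
      unfold spComp at ha'
      rw [if_neg hn] at ha'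
      have : a = 0 := by simpa using ha'
      rw [this]
      show X.evalS x 0 ∈ _
      rw [map_zero]
      exact Submodule.zero_mem _

lemma GrAlg.spHom_gen (X : GrAlg F) (g : X.G) (x : X.A) (hx : x ∈ X.comp g) :
    (X.spHom g x hx).hom (spX F 0) = x := X.evalS_gen x

/-- Naturality of `evalS`. -/
lemma GrAlg.evalS_naturality {X Y : GrAlg F} (f : GrAlgHom X Y) (x : X.A) (p : SP F) :
    f.hom (X.evalS x p) = Y.evalS (f.hom x) p := by
  have key : ∀ q : Polynomial F,
      f.hom ((Polynomial.aeval (Unitization.inr x : Unitization F X.A) q).snd)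
        = (Polynomial.aeval (Unitization.inr (f.hom x) : Unitization F Y.A) q).snd := by
    intro q
    induction q using Polynomial.induction_on' with
    | add p q hp hq =>
      rw [map_add, map_add, Unitization.snd_add, Unitization.snd_add, map_add, hp, hq]
    | monomial n c =>
      rw [aeval_monomial, aeval_monomial]
      have hsnd : ∀ {R : Type u} [NonUnitalRing R] [Module F R] [SMulCommClass F R R]
          [IsScalarTower F R R] (u : Unitization F R),
          ((algebraMap F (Unitization F R)) c * u).snd = c • u.snd := by
        intro R _ _ _ _ u
        rw [Unitization.algebraMap_eq_inl]
        rw [Unitization.snd_mul]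
        simp [Unitization.fst_inl, Unitization.snd_inl]
      rw [hsnd, hsnd]
      cases n with
      | zero =>
        rw [pow_zero, pow_zero]
        have h1 : ((1 : Unitization F X.A)).snd = 0 := Unitization.snd_one
        have h2 : ((1 : Unitization F Y.A)).snd = 0 := Unitization.snd_one
        rw [h1, h2, smul_zero, smul_zero, map_zero]
      | succ m =>
        rw [inr_nup, inr_nup, Unitization.snd_inr, Unitization.snd_inr, map_smul]
        congr 1
        induction m with
        | zero => rfl
        | succ k ih => rw [nup, nup, map_mul, ih]
  exact key (p : Polynomial F)

end EvalS
section FzDef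

open scoped Classical

variable (F : Type u) [Field F]

/-- `F` with the zero multiplication. -/
def Fz : Type u := F

instance : AddCommGroup (Fz F) := inferInstanceAs (AddCommGroup F)
instance : Module F (Fz F) := inferInstanceAs (Module F F)

instance : Mul (Fz F) := ⟨fun _ _ => 0⟩

@[simp] lemma Fz.mul_def (x y : Fz F) : x * y = 0 := rfl

instance : NonUnitalRing (Fz F) :=
  { (inferInstance : AddCommGroup (Fz F)) with
    mul := (· * ·)
    left_distrib := fun _ _ _ => (add_zero (0 : Fz F)).symm
    right_distrib := fun _ _ _ => (add_zero (0 : Fz F)).symm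
    zero_mul := fun _ => rfl
    mul_zero := fun _ => rfl
    mul_assoc := fun _ _ _ => by simp [Fz.mul_def] }

instance : SMulCommClass F (Fz F) (Fz F) :=
  ⟨fun c x y => by
    show c • (x * y) = x * (c • y)
    simp [Fz.mul_def]⟩

instance : IsScalarTower F (Fz F) (Fz F) :=
  ⟨fun c x y => by
    show (c • x) * y = c • (x * y)
    simp [Fz.mul_def]⟩

/-- The value of an element of `Fz F` as a scalar. -/
def Fz.v (x : Fz F) : F := x

@[simp] lemma Fz.v_add (x y : Fz F) : (x + y).v = x.v + y.v := rfl
@[simp] lemma Fz.v_smul (c : F) (x : Fz F) : (c • x).v = c * x.v := rfl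
@[simp] lemma Fz.v_zero : (0 : Fz F).v = 0 := rfl

/-- The square-zero one-dimensional test object. -/
noncomputable def SqZObj : GrAlg F where
  A := Fz F
  G := Gz.{u}
  comp n := if n = 1 then ⊤ else ⊥
  mul_mem := by
    intro m n a b _ _
    have : a * b = 0 := rfl
    rw [this]
    exact Submodule.zero_mem _
  independent := by
    intro n
    by_cases hn : n = 1
    · subst hn
      have hle : (⨆ (m : Gz.{u}) (_ : m ≠ (1 : Gz.{u})),
          (if m = 1 then (⊤ : Submodule F (Fz F)) else ⊥)) ≤ ⊥ :=
        iSup_le fun m => iSup_le fun hm => le_of_eq (if_neg hm)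
      exact Disjoint.mono_right hle disjoint_bot_right
    · exact Disjoint.mono_left (le_of_eq (if_neg hn)) disjoint_bot_left
  spans := by
    rw [eq_top_iff]
    intro x _
    apply Submodule.mem_iSup_of_mem (1 : Gz.{u})
    rw [if_pos rfl]
    trivial

end FzDef

section DJdef

open scoped Classical

variable {F : Type u} [Field F]

/-- The test object `A × F·b` used in the square-zero case: the grading of `A`
with a copy of `F` glued to the `g`-component. -/
noncomputable def DJObj (X : GrAlg F) (g : X.G) : GrAlg F where
  A := X.A × Fz F
  G := X.G
  comp x := (X.comp x).prod (if x = g then (⊤ : Submodule F (Fz F)) else ⊥)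
  mul_mem := by
    intro x y z w hz hw
    constructor
    · exact X.mul_mem hz.1 hw.1
    · show z.2 * w.2 ∈ _
      have : z.2 * w.2 = 0 := rfl
      rw [this]
      exact Submodule.zero_mem _
  independent := by
    intro x
    rw [Submodule.disjoint_def]
    intro z hz hsup
    have hle : (⨆ (y : X.G) (_ : y ≠ x),
          (X.comp y).prod (if y = g then (⊤ : Submodule F (Fz F)) else ⊥))
        ≤ Submodule.prod
          (⨆ (y : X.G) (_ : y ≠ x), X.comp y)
          (⨆ (y : X.G) (_ : y ≠ x), if y = g then (⊤ : Submodule F (Fz F)) else ⊥) :=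
      iSup_le fun y => iSup_le fun hy => Submodule.prod_mono
        (le_iSup₂ (f := fun (y : X.G) (_ : y ≠ x) => X.comp y) y hy)
        (le_iSup₂ (f := fun (y : X.G) (_ : y ≠ x) =>
          if y = g then (⊤ : Submodule F (Fz F)) else ⊥) y hy)
    have hsup' := hle hsup
    have h1 : z.1 = 0 :=
      Submodule.disjoint_def.mp (X.independent x) z.1 hz.1 hsup'.1
    have h2 : z.2 = 0 := by
      by_cases hx : x = g
      · have hle2 : (⨆ (y : X.G) (_ : y ≠ x),
            (if y = g then (⊤ : Submodule F (Fz F)) else ⊥)) ≤ ⊥ :=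
          iSup_le fun y => iSup_le fun hy =>
            le_of_eq (if_neg (fun hyg => hy (hyg.trans hx.symm)))
        have := hle2 hsup'.2
        simpa using this
      · have h2' := hz.2
        rw [if_neg hx] at h2'
        simpa using h2'
    exact Prod.ext h1 h2
  spans := by
    rw [eq_top_iff]
    intro z _
    have hdec : z = (z.1, (0 : Fz F)) + ((0 : X.A), z.2) := by
      refine Prod.ext ?_ ?_ <;> simp
    rw [hdec]
    apply Submodule.add_mem
    · have hz1 : z.1 ∈ ⨆ y, X.comp y := by rw [X.spans]; trivial
      refine Submodule.iSup_induction (motive := fun a => ((a, (0 : Fz F)) : X.A × Fz F) ∈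
        ⨆ y, (X.comp y).prod (if y = g then (⊤ : Submodule F (Fz F)) else ⊥))
        X.comp hz1 ?_ ?_ ?_
      · intro y a ha
        apply Submodule.mem_iSup_of_mem y
        exact ⟨ha, Submodule.zero_mem _⟩
      · show ((0 : X.A), (0 : Fz F)) ∈ _
        have h00 : (((0 : X.A), (0 : Fz F)) : X.A × Fz F) = 0 := rfl
        rw [h00]
        exact Submodule.zero_mem _
      · intro a b ha hb
        show ((a + b, (0 : Fz F)) : X.A × Fz F) ∈ _
        have hab : ((a + b, (0 : Fz F)) : X.A × Fz F)
            = ((a, (0:Fz F)) : X.A × Fz F) + ((b, (0:Fz F)) : X.A × Fz F) := by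
          refine Prod.ext ?_ ?_ <;> simp
        rw [hab]
        exact Submodule.add_mem _ ha hb
    · apply Submodule.mem_iSup_of_mem g
      refine ⟨Submodule.zero_mem _, ?_⟩
      rw [if_pos rfl]
      trivial

/-- Projection to `A` from the glued object. -/
noncomputable def DJfst (X : GrAlg F) (g : X.G) : GrAlgHom (DJObj X g) X where
  hom :=
    { toFun := fun z => z.1
      map_add' := fun _ _ => rfl
      map_mul' := fun _ _ => rfl
      map_zero' := rfl
      map_smul' := fun _ _ => rfl }
  graded x := ⟨x, fun z hz => hz.1⟩

/-- The map to `B` from the glued object, determined by a square-zero homogeneous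
element. -/
noncomputable def DJsnd (X : GrAlg F) (g : X.G) (B : GrAlg F) {h : B.G} (b : B.A)
    (hb : b ∈ B.comp h) (hbb : b * b = 0) : GrAlgHom (DJObj X g) B where
  hom :=
    { toFun := fun z => Fz.v F z.2 • b
      map_add' := fun z w => add_smul (Fz.v F z.2) (Fz.v F w.2) b
      map_mul' := fun z w => by
        show (0 : F) • b = (Fz.v F z.2 • b) * (Fz.v F w.2 • b)
        rw [zero_smul, smul_mul_assoc, mul_smul_comm, hbb, smul_zero, smul_zero]
      map_zero' := zero_smul F b
      map_smul' := fun c z => mul_smul c (Fz.v F z.2) b }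
  graded x := by
    refine ⟨h, ?_⟩
    intro z hz
    by_cases hx : x = g
    · exact Submodule.smul_mem _ _ hb
    · have h2' := hz.2
      split_ifs at h2' with hxg
      · exact absurd hxg hx
      have h00 : z.2 = (0 : Fz F) := by simpa using h2'
      have h0 : Fz.v F z.2 = 0 := by rw [h00]; rfl
      show Fz.v F z.2 • b ∈ _
      rw [h0, zero_smul]
      exact Submodule.zero_mem _

/-- The zero morphism. -/
noncomputable def zeroHom (D X : GrAlg F) : GrAlgHom D X where
  hom :=
    { toFun := fun _ => 0
      map_add' := fun _ _ => (add_zero 0).symm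
      map_mul' := fun _ _ => (mul_zero 0).symm
      map_zero' := rfl
      map_smul' := fun c _ => (smul_zero c).symm }
  graded _ := ⟨1, fun _ _ => Submodule.zero_mem _⟩

/-- The morphism from the square-zero object determined by a square-zero
homogeneous element. -/
noncomputable def sqzHom (B : GrAlg F) {h : B.G} (b : B.A) (hb : b ∈ B.comp h)
    (hbb : b * b = 0) : GrAlgHom (SqZObj F) B where
  hom :=
    { toFun := fun x => Fz.v F x • b
      map_add' := fun x y => add_smul (Fz.v F x) (Fz.v F y) b
      map_mul' := fun x y => by
        show (0 : F) • b = (Fz.v F x • b) * (Fz.v F y • b)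
        rw [zero_smul, smul_mul_assoc, mul_smul_comm, hbb, smul_zero, smul_zero]
      map_zero' := zero_smul F b
      map_smul' := fun c x => mul_smul c (Fz.v F x) b }
  graded _ := ⟨h, fun x _ => Submodule.smul_mem _ _ hb⟩

end DJdef
section Statement

variable (F)

/-- `P` together with `π, ρ` is a product of `A` and `B` in `GrAlg_F`. -/
def IsProductGrAlg {A B P : GrAlg F} (π : GrAlgHom P A) (ρ : GrAlgHom P B) : Prop :=
  ∀ (D : GrAlg F) (α : GrAlgHom D A) (β : GrAlgHom D B),
    ∃! ψ : GrAlgHom D P, π.comp ψ = α ∧ ρ.comp ψ = β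

/-- `P` together with `π, ρ` is a product of `A` and `B` in `GrAlg¹_F`. -/
def IsProductGrAlgOne {A B P : GrAlgOne F} (π : GrAlgOneHom P A) (ρ : GrAlgOneHom P B) : Prop :=
  ∀ (D : GrAlgOne F) (α : GrAlgOneHom D A) (β : GrAlgOneHom D B),
    ∃! ψ : GrAlgOneHom D P, π.comp ψ = α ∧ ρ.comp ψ = β

end Statement
section UnitalMain

variable {F : Type u} [Field F]

lemma GrAlgOneHom.comp_hom_apply {X Y Z : GrAlgOne F} (g : GrAlgOneHom Y Z)
    (f : GrAlgOneHom X Y) (a : X.A) :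
    (g.comp f).toGrAlgHom.hom a = g.toGrAlgHom.hom (f.toGrAlgHom.hom a) := rfl

lemma GrAlgOne.polyHom_hom_X (X : GrAlgOne F) (g : X.G) (x : X.A) (hx : x ∈ X.comp g) :
    (X.polyHom g x hx).toGrAlgHom.hom Polynomial.X = x := X.aevalHom_X x

lemma exists_lift_one {A B P : GrAlgOne F} (π : GrAlgOneHom P A) (ρ : GrAlgOneHom P B)
    (hP : IsProductGrAlgOne F π ρ) {ga : A.G} {x : A.A} (hx : x ∈ A.comp ga)
    {gb : B.G} {y : B.A} (hy : y ∈ B.comp gb) :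
    ∃ (w : P.G) (p : P.A), p ∈ P.comp w ∧ π.toGrAlgHom.hom p = x ∧
      ρ.toGrAlgHom.hom p = y := by
  obtain ⟨ψ, ⟨hπ, hρ⟩, -⟩ := hP (PolyObj F) (A.polyHom ga x hx) (B.polyHom gb y hy)
  obtain ⟨w, hw⟩ := ψ.toGrAlgHom.graded (gzo 1)
  refine ⟨w, ψ.toGrAlgHom.hom Polynomial.X, hw _ (X_mem_polyComp F), ?_, ?_⟩
  · have h1 := congrArg (fun m : GrAlgOneHom (PolyObj F) A =>
      m.toGrAlgHom.hom Polynomial.X) hπ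
    simp only [GrAlgOneHom.comp_hom_apply, GrAlgOne.polyHom_hom_X] at h1
    exact h1
  · have h1 := congrArg (fun m : GrAlgOneHom (PolyObj F) B =>
      m.toGrAlgHom.hom Polynomial.X) hρ
    simp only [GrAlgOneHom.comp_hom_apply, GrAlgOne.polyHom_hom_X] at h1
    exact h1

lemma unique_lift_one {A B P : GrAlgOne F} (π : GrAlgOneHom P A) (ρ : GrAlgOneHom P B)
    (hP : IsProductGrAlgOne F π ρ) {ga : A.G} {x : A.A} (hx : x ∈ A.comp ga)
    {gb : B.G} {y : B.A} (hy : y ∈ B.comp gb)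
    {w₁ w₂ : P.G} {r₁ r₂ : P.A} (h₁ : r₁ ∈ P.comp w₁) (h₂ : r₂ ∈ P.comp w₂)
    (hπ₁ : π.toGrAlgHom.hom r₁ = x) (hρ₁ : ρ.toGrAlgHom.hom r₁ = y)
    (hπ₂ : π.toGrAlgHom.hom r₂ = x) (hρ₂ : ρ.toGrAlgHom.hom r₂ = y) :
    r₁ = r₂ := by
  obtain ⟨ψ, -, huniq⟩ := hP (PolyObj F) (A.polyHom ga x hx) (B.polyHom gb y hy)
  have key : ∀ (w : P.G) (r : P.A) (h : r ∈ P.comp w),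
      π.toGrAlgHom.hom r = x → ρ.toGrAlgHom.hom r = y → P.polyHom w r h = ψ := by
    intro w r h hπr hρr
    apply huniq
    constructor
    · apply GrAlgOneHom.ext
      refine DFunLike.ext _ _ fun p => ?_
      show π.toGrAlgHom.hom (P.aevalHom r p) = A.aevalHom x p
      rw [GrAlgOne.aevalHom_naturality π r p, hπr]
    · apply GrAlgOneHom.ext
      refine DFunLike.ext _ _ fun p => ?_
      show ρ.toGrAlgHom.hom (P.aevalHom r p) = B.aevalHom y p
      rw [GrAlgOne.aevalHom_naturality ρ r p, hρr]
  have h12 : P.polyHom w₁ r₁ h₁ = P.polyHom w₂ r₂ h₂ := by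
    rw [key w₁ r₁ h₁ hπ₁ hρ₁, key w₂ r₂ h₂ hπ₂ hρ₂]
  have := congrArg (fun m : GrAlgOneHom (PolyObj F) P =>
    m.toGrAlgHom.hom Polynomial.X) h12
  simpa only [GrAlgOne.polyHom_hom_X] using this

theorem unital_half (A B : GrAlgOne F)
    (hsupp : ∃ g t : A.G, g ≠ t ∧ g ∈ A.toGrAlg.supp ∧ t ∈ A.toGrAlg.supp)
    (hB : ∃ b : B.A, b ≠ 0) :
    ¬ ∃ (P : GrAlgOne F) (π : GrAlgOneHom P A) (ρ : GrAlgOneHom P B),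
        IsProductGrAlgOne F π ρ := by
  rintro ⟨P, π, ρ, hP⟩
  obtain ⟨g, t, hgt, hgsupp, htsupp⟩ := hsupp
  obtain ⟨a_g, hag, hagne⟩ := A.toGrAlg.exists_homog_of_mem_supp hgsupp
  obtain ⟨a_t, hat, hatne⟩ := A.toGrAlg.exists_homog_of_mem_supp htsupp
  obtain ⟨h, b, hb, hbne⟩ := B.toGrAlg.exists_homog hB
  obtain ⟨u₁, p₁, hp₁mem, hπp₁, hρp₁⟩ := exists_lift_one π ρ hP hag hb
  obtain ⟨u₂, p₂, hp₂mem, hπp₂, hρp₂⟩ := exists_lift_one π ρ hP hat hb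
  obtain ⟨v, q, hqmem, hπq, hρq⟩ :=
    exists_lift_one π ρ hP (Submodule.zero_mem (A.comp 1)) B.one_mem
  have hr₁mem : p₁ * q ∈ P.comp (u₁ * v) := P.mul_mem hp₁mem hqmem
  have hr₂mem : p₂ * q ∈ P.comp (u₂ * v) := P.mul_mem hp₂mem hqmem
  have hπr₁ : π.toGrAlgHom.hom (p₁ * q) = 0 := by
    rw [map_mul, hπp₁, hπq, mul_zero]
  have hρr₁ : ρ.toGrAlgHom.hom (p₁ * q) = b := by
    rw [map_mul, hρp₁, hρq]; exact B.mul_one b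
  have hπr₂ : π.toGrAlgHom.hom (p₂ * q) = 0 := by
    rw [map_mul, hπp₂, hπq, mul_zero]
  have hρr₂ : ρ.toGrAlgHom.hom (p₂ * q) = b := by
    rw [map_mul, hρp₂, hρq]; exact B.mul_one b
  have hre : p₁ * q = p₂ * q :=
    unique_lift_one π ρ hP (Submodule.zero_mem (A.comp 1)) hb
      hr₁mem hr₂mem hπr₁ hρr₁ hπr₂ hρr₂
  have hrne : p₁ * q ≠ 0 := by
    intro hc
    exact hbne (by rw [← hρr₁, hc, map_zero])
  have huv : u₁ * v = u₂ * v :=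
    P.toGrAlg.mem_unique hrne hr₁mem (hre ▸ hr₂mem)
  have hu : u₁ = u₂ := mul_right_cancel huv
  obtain ⟨e, he⟩ := π.toGrAlgHom.graded u₁
  have h1 : a_g ∈ A.comp e := hπp₁ ▸ he p₁ hp₁mem
  have h2 : a_t ∈ A.comp e := hπp₂ ▸ he p₂ (hu ▸ hp₂mem)
  exact hgt ((A.toGrAlg.mem_unique hagne hag h1).trans
    (A.toGrAlg.mem_unique hatne hat h2).symm)

end UnitalMain
section NonUnitalMain

variable {F : Type u} [Field F]

lemma GrAlgHom.comp_hom_apply {X Y Z : GrAlg F} (g : GrAlgHom Y Z) (f : GrAlgHom X Y)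
    (a : X.A) : (g.comp f).hom a = g.hom (f.hom a) := rfl

/-- `Fz F` is definitionally `F`; an explicit packing map. -/
def Fz.of (F : Type u) [Field F] (c : F) : Fz F := c

lemma exists_lift_na {A B P : GrAlg F} (π : GrAlgHom P A) (ρ : GrAlgHom P B)
    (hP : IsProductGrAlg F π ρ) {ga : A.G} {x : A.A} (hx : x ∈ A.comp ga)
    {gb : B.G} {y : B.A} (hy : y ∈ B.comp gb) :
    ∃ (w : P.G) (p : P.A), p ∈ P.comp w ∧ π.hom p = x ∧ ρ.hom p = y := by
  obtain ⟨ψ, ⟨hπ, hρ⟩, -⟩ := hP (SPObj F) (A.spHom ga x hx) (B.spHom gb y hy)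
  obtain ⟨w, hw⟩ := ψ.graded (gzo 1)
  refine ⟨w, ψ.hom (spX F 0), hw _ (spX_mem_spComp F), ?_, ?_⟩
  · have h1 := congrArg (fun m : GrAlgHom (SPObj F) A => m.hom (spX F 0)) hπ
    simp only [GrAlgHom.comp_hom_apply, GrAlg.spHom_gen] at h1
    exact h1
  · have h1 := congrArg (fun m : GrAlgHom (SPObj F) B => m.hom (spX F 0)) hρ
    simp only [GrAlgHom.comp_hom_apply, GrAlg.spHom_gen] at h1
    exact h1

lemma unique_lift_na {A B P : GrAlg F} (π : GrAlgHom P A) (ρ : GrAlgHom P B)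
    (hP : IsProductGrAlg F π ρ) {ga : A.G} {x : A.A} (hx : x ∈ A.comp ga)
    {gb : B.G} {y : B.A} (hy : y ∈ B.comp gb)
    {w₁ w₂ : P.G} {r₁ r₂ : P.A} (h₁ : r₁ ∈ P.comp w₁) (h₂ : r₂ ∈ P.comp w₂)
    (hπ₁ : π.hom r₁ = x) (hρ₁ : ρ.hom r₁ = y)
    (hπ₂ : π.hom r₂ = x) (hρ₂ : ρ.hom r₂ = y) : r₁ = r₂ := by
  obtain ⟨ψ, -, huniq⟩ := hP (SPObj F) (A.spHom ga x hx) (B.spHom gb y hy)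
  have key : ∀ (w : P.G) (r : P.A) (hm : r ∈ P.comp w),
      π.hom r = x → ρ.hom r = y → P.spHom w r hm = ψ := by
    intro w r hm hπr hρr
    apply huniq
    constructor
    · apply GrAlgHom.ext
      refine DFunLike.ext _ _ fun p => ?_
      show π.hom (P.evalS r p) = A.evalS x p
      rw [GrAlg.evalS_naturality π r p, hπr]
    · apply GrAlgHom.ext
      refine DFunLike.ext _ _ fun p => ?_
      show ρ.hom (P.evalS r p) = B.evalS y p
      rw [GrAlg.evalS_naturality ρ r p, hρr]
  have h12 : P.spHom w₁ r₁ h₁ = P.spHom w₂ r₂ h₂ := by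
    rw [key w₁ r₁ h₁ hπ₁ hρ₁, key w₂ r₂ h₂ hπ₂ hρ₂]
  have := congrArg (fun m : GrAlgHom (SPObj F) P => m.hom (spX F 0)) h12
  simpa only [GrAlg.spHom_gen] using this

theorem nonunital_half (A B : GrAlg F)
    (hsupp : ∃ g t : A.G, g ≠ t ∧ g ∈ A.supp ∧ t ∈ A.supp)
    (hB : ∃ b : B.A, b ≠ 0) :
    ¬ ∃ (P : GrAlg F) (π : GrAlgHom P A) (ρ : GrAlgHom P B),
        IsProductGrAlg F π ρ := by
  rintro ⟨P, π, ρ, hP⟩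
  obtain ⟨g, t, hgt, hgs, hts⟩ := hsupp
  obtain ⟨a_g, hag, hagne⟩ := A.exists_homog_of_mem_supp hgs
  obtain ⟨a_t, hat, hatne⟩ := A.exists_homog_of_mem_supp hts
  obtain ⟨h, b, hb, hbne⟩ := B.exists_homog hB
  by_cases hbb : b * b = 0
  · -- square-zero case: use the glued objects
    obtain ⟨ψg, ⟨hπg, hρg⟩, -⟩ := hP (DJObj A g) (DJfst A g) (DJsnd A g B b hb hbb)
    obtain ⟨ψt, ⟨hπt, hρt⟩, -⟩ := hP (DJObj A t) (DJfst A t) (DJsnd A t B b hb hbb)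
    obtain ⟨wg, hwg⟩ := ψg.graded g
    obtain ⟨wt, hwt⟩ := ψt.graded t
    set e1 : P.A := ψg.hom (a_g, Fz.of F 1) with he1
    set s : P.A := ψg.hom ((0 : A.A), Fz.of F 1) with hsdef
    set e2 : P.A := ψt.hom (a_t, Fz.of F 1) with he2
    set s' : P.A := ψt.hom ((0 : A.A), Fz.of F 1) with hs'def
    have hmemg : ((a_g, Fz.of F 1) : (DJObj A g).A) ∈ (DJObj A g).comp g :=
      ⟨hag, by rw [if_pos rfl]; trivial⟩
    have hmemg0 : (((0 : A.A), Fz.of F 1) : (DJObj A g).A) ∈ (DJObj A g).comp g :=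
      ⟨Submodule.zero_mem _, by rw [if_pos rfl]; trivial⟩
    have hmemt : ((a_t, Fz.of F 1) : (DJObj A t).A) ∈ (DJObj A t).comp t :=
      ⟨hat, by rw [if_pos rfl]; trivial⟩
    have hmemt0 : (((0 : A.A), Fz.of F 1) : (DJObj A t).A) ∈ (DJObj A t).comp t :=
      ⟨Submodule.zero_mem _, by rw [if_pos rfl]; trivial⟩
    have he1mem : e1 ∈ P.comp wg := hwg _ hmemg
    have hsmem : s ∈ P.comp wg := hwg _ hmemg0
    have he2mem : e2 ∈ P.comp wt := hwt _ hmemt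
    have hs'mem : s' ∈ P.comp wt := hwt _ hmemt0
    have hπe1 : π.hom e1 = a_g := by
      have h1 := congrArg (fun m : GrAlgHom (DJObj A g) A =>
        m.hom (a_g, Fz.of F 1)) hπg
      exact h1
    have hπe2 : π.hom e2 = a_t := by
      have h1 := congrArg (fun m : GrAlgHom (DJObj A t) A =>
        m.hom (a_t, Fz.of F 1)) hπt
      exact h1
    have hρs : ρ.hom s = b := by
      have h1 := congrArg (fun m : GrAlgHom (DJObj A g) B =>
        m.hom ((0 : A.A), Fz.of F 1)) hρg
      have h2 : (DJsnd A g B b hb hbb).hom ((0 : A.A), Fz.of F 1) = b := by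
        show Fz.v F (Fz.of F 1) • b = b
        show (1 : F) • b = b
        exact one_smul F b
      have h1' : ρ.hom s = (DJsnd A g B b hb hbb).hom ((0 : A.A), Fz.of F 1) := h1
      rw [h2] at h1'
      exact h1'
    have hρs' : ρ.hom s' = b := by
      have h1 := congrArg (fun m : GrAlgHom (DJObj A t) B =>
        m.hom ((0 : A.A), Fz.of F 1)) hρt
      have h2 : (DJsnd A t B b hb hbb).hom ((0 : A.A), Fz.of F 1) = b := by
        show Fz.v F (Fz.of F 1) • b = b
        show (1 : F) • b = b
        exact one_smul F b
      have h1' : ρ.hom s' = (DJsnd A t B b hb hbb).hom ((0 : A.A), Fz.of F 1) := h1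
      rw [h2] at h1'
      exact h1'
    have hπs : π.hom s = 0 := by
      have h1 := congrArg (fun m : GrAlgHom (DJObj A g) A =>
        m.hom ((0 : A.A), Fz.of F 1)) hπg
      exact h1
    have hπs' : π.hom s' = 0 := by
      have h1 := congrArg (fun m : GrAlgHom (DJObj A t) A =>
        m.hom ((0 : A.A), Fz.of F 1)) hπt
      exact h1
    have hzz : (((0 : A.A), Fz.of F 1) : (DJObj A g).A)
        * (((0 : A.A), Fz.of F 1) : (DJObj A g).A) = 0 := by
      refine Prod.ext ?_ ?_
      · show (0 : A.A) * 0 = 0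
        rw [mul_zero]
      · rfl
    have hss : s * s = 0 := by
      calc s * s = ψg.hom ((((0 : A.A), Fz.of F 1) : (DJObj A g).A)
            * (((0 : A.A), Fz.of F 1) : (DJObj A g).A)) := (map_mul ψg.hom _ _).symm
        _ = 0 := by rw [hzz]; exact map_zero ψg.hom
    have hzz' : (((0 : A.A), Fz.of F 1) : (DJObj A t).A)
        * (((0 : A.A), Fz.of F 1) : (DJObj A t).A) = 0 := by
      refine Prod.ext ?_ ?_
      · show (0 : A.A) * 0 = 0
        rw [mul_zero]
      · rfl
    have hss' : s' * s' = 0 := by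
      calc s' * s' = ψt.hom ((((0 : A.A), Fz.of F 1) : (DJObj A t).A)
            * (((0 : A.A), Fz.of F 1) : (DJObj A t).A)) := (map_mul ψt.hom _ _).symm
        _ = 0 := by rw [hzz']; exact map_zero ψt.hom
    -- uniqueness via the square-zero object
    obtain ⟨ψ0, -, huniq⟩ := hP (SqZObj F) (zeroHom (SqZObj F) A) (sqzHom B b hb hbb)
    have key : ∀ (w : P.G) (r : P.A) (hm : r ∈ P.comp w) (hrr : r * r = 0),
        π.hom r = 0 → ρ.hom r = b → sqzHom P r hm hrr = ψ0 := by
      intro w r hm hrr hπr hρr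
      apply huniq
      constructor
      · apply GrAlgHom.ext
        refine DFunLike.ext _ _ fun z => ?_
        show π.hom (Fz.v F z • r) = 0
        rw [map_smul, hπr, smul_zero]
      · apply GrAlgHom.ext
        refine DFunLike.ext _ _ fun z => ?_
        show ρ.hom (Fz.v F z • r) = Fz.v F z • b
        rw [map_smul, hρr]
    have hkey : sqzHom P s hsmem hss = sqzHom P s' hs'mem hss' := by
      rw [key wg s hsmem hss hπs hρs, key wt s' hs'mem hss' hπs' hρs']
    have hseq : s = s' := by
      have h1 := congrArg (fun m : GrAlgHom (SqZObj F) P =>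
        m.hom (Fz.of F 1)) hkey
      have h2 : (sqzHom P s hsmem hss).hom (Fz.of F 1) = s := by
        show Fz.v F (Fz.of F 1) • s = s
        show (1 : F) • s = s
        exact one_smul F s
      have h3 : (sqzHom P s' hs'mem hss').hom (Fz.of F 1) = s' := by
        show Fz.v F (Fz.of F 1) • s' = s'
        show (1 : F) • s' = s'
        exact one_smul F s'
      have h1' : (sqzHom P s hsmem hss).hom (Fz.of F 1)
          = (sqzHom P s' hs'mem hss').hom (Fz.of F 1) := h1
      rw [h2, h3] at h1'
      exact h1'
    have hsne : s ≠ 0 := by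
      intro hc
      exact hbne (by rw [← hρs, hc, map_zero])
    have hw : wg = wt := P.mem_unique hsne hsmem (hseq ▸ hs'mem)
    obtain ⟨e, he⟩ := π.graded wg
    have h1 : a_g ∈ A.comp e := hπe1 ▸ he e1 he1mem
    have h2 : a_t ∈ A.comp e := hπe2 ▸ he e2 (hw ▸ he2mem)
    exact hgt ((A.mem_unique hagne hag h1).trans (A.mem_unique hatne hat h2).symm)
  · -- the case `b * b ≠ 0`: use the free test object
    obtain ⟨u₁, p₁, hp₁mem, hπp₁, hρp₁⟩ := exists_lift_na π ρ hP hag hb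
    obtain ⟨u₂, p₂, hp₂mem, hπp₂, hρp₂⟩ := exists_lift_na π ρ hP hat hb
    obtain ⟨v, q, hqmem, hπq, hρq⟩ :=
      exists_lift_na π ρ hP (Submodule.zero_mem (A.comp 1)) hb
    have hr₁mem : p₁ * q ∈ P.comp (u₁ * v) := P.mul_mem hp₁mem hqmem
    have hr₂mem : p₂ * q ∈ P.comp (u₂ * v) := P.mul_mem hp₂mem hqmem
    have hπr₁ : π.hom (p₁ * q) = 0 := by rw [map_mul, hπp₁, hπq, mul_zero]
    have hρr₁ : ρ.hom (p₁ * q) = b * b := by rw [map_mul, hρp₁, hρq]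
    have hπr₂ : π.hom (p₂ * q) = 0 := by rw [map_mul, hπp₂, hπq, mul_zero]
    have hρr₂ : ρ.hom (p₂ * q) = b * b := by rw [map_mul, hρp₂, hρq]
    have hre : p₁ * q = p₂ * q :=
      unique_lift_na π ρ hP (Submodule.zero_mem (A.comp 1)) (B.mul_mem hb hb)
        hr₁mem hr₂mem hπr₁ hρr₁ hπr₂ hρr₂
    have hrne : p₁ * q ≠ 0 := by
      intro hc
      exact hbb (by rw [← hρr₁, hc, map_zero])
    have huv : u₁ * v = u₂ * v :=
      P.mem_unique hrne hr₁mem (hre ▸ hr₂mem)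
    have hu : u₁ = u₂ := mul_right_cancel huv
    obtain ⟨e, he⟩ := π.graded u₁
    have h1 : a_g ∈ A.comp e := hπp₁ ▸ he p₁ hp₁mem
    have h2 : a_t ∈ A.comp e := hπp₂ ▸ he p₂ (hu ▸ hp₂mem)
    exact hgt ((A.mem_unique hagne hag h1).trans (A.mem_unique hatne hat h2).symm)

end NonUnitalMain
section Statement
/-- If the support of the grading on `A` has at least two elements and `B ≠ 0`, then the
product of `A` and `B` exists neither in `GrAlg_F` nor in `GrAlg¹_F`. -/
theorem no_product_of_two_support_elements (F : Type u) [Field F] :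
    (∀ A B : GrAlg F,
      (∃ g t : A.G, g ≠ t ∧ g ∈ A.supp ∧ t ∈ A.supp) → (∃ b : B.A, b ≠ 0) →
        ¬ ∃ (P : GrAlg F) (π : GrAlgHom P A) (ρ : GrAlgHom P B), IsProductGrAlg F π ρ)
    ∧
    (∀ A B : GrAlgOne F,
      (∃ g t : A.G, g ≠ t ∧ g ∈ A.toGrAlg.supp ∧ t ∈ A.toGrAlg.supp) →
        (∃ b : B.A, b ≠ 0) →
        ¬ ∃ (P : GrAlgOne F) (π : GrAlgOneHom P A) (ρ : GrAlgOneHom P B),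
            IsProductGrAlgOne F π ρ) := by
  exact ⟨fun A B hsupp hB => nonunital_half A B hsupp hB,
    fun A B hsupp hB => unital_half A B hsupp hB⟩

end Statement
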